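/- Every C ∈ SO₀(2,1) with c₁₁ > 1 can be written uniquely as C = k s with k = 1 ⊕ R for a 2×2 rotation R and s a symmetric matrix in SO₀(2,1); moreover the rotation factor k coincides with the rotation factor in the unique decomposition C = s' k'. -/

import Mathlib

open Matrix
noncomputable def Imat : Matrix (Fin 3) (Fin 3) ℝ := diagonal ![-1, 1, 1]
noncomputable def amat : Matrix (Fin 3) (Fin 3) ℝ := !![0,1,0; 1,0,0; 0,0,0]
noncomputable def bmat : Matrix (Fin 3) (Fin 3) ℝ := !![0,0,1; 0,0,0; 1,0,0]
noncomputable def cmat : Matrix (Fin 3) (Fin 3) ℝ := !![0,0,0; 0,0,-1; 0,1,0]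
noncomputable def rot2 (η : ℝ) : Matrix (Fin 2) (Fin 2) ℝ :=
  !![Real.cos η, -Real.sin η; Real.sin η, Real.cos η]
noncomputable def Kmat (η : ℝ) : Matrix (Fin 3) (Fin 3) ℝ :=
  !![1,0,0; 0,Real.cos η,-Real.sin η; 0,Real.sin η,Real.cos η]
def inSO21 (C : Matrix (Fin 3) (Fin 3) ℝ) : Prop :=
  C⁻¹ = Imat * Cᵀ * Imat ∧ C.det = 1 ∧ 1 ≤ C 0 0

lemma Imat_mul_Imat : Imat * Imat = 1 := by
  ext i j; fin_cases i <;> fin_cases j <;> simp [Imat, diagonal, Matrix.one_apply, Matrix.mul_apply, Fin.sum_univ_three]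

lemma Kmat_mul_Kmat (a b : ℝ) : Kmat a * Kmat b = Kmat (a + b) := by
  ext i j
  fin_cases i <;> fin_cases j <;>
    simp [Kmat, Matrix.mul_apply, Fin.sum_univ_three, Real.cos_add, Real.sin_add,
      Matrix.vecHead, Matrix.vecTail] <;> ring

lemma Kmat_transpose (a : ℝ) : (Kmat a)ᵀ = Kmat (-a) := by
  ext i j
  fin_cases i <;> fin_cases j <;>
    simp [Kmat, Real.cos_neg, Real.sin_neg, Matrix.vecHead, Matrix.vecTail]

lemma Kmat_zero : Kmat 0 = 1 := by
  ext i j; fin_cases i <;> fin_cases j <;>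
    simp [Kmat, Matrix.one_apply, Matrix.vecHead, Matrix.vecTail]

lemma Imat_Kmat_comm (a : ℝ) : Imat * Kmat a = Kmat a * Imat := by
  ext i j
  fin_cases i <;> fin_cases j <;>
    simp [Kmat, Imat, Matrix.mul_apply, Fin.sum_univ_three, diagonal,
      Matrix.vecHead, Matrix.vecTail]

lemma det_Kmat (a : ℝ) : (Kmat a).det = 1 := by
  simp [Kmat, Matrix.det_fin_three]
  nlinarith [Real.sin_sq_add_cos_sq a]

lemma so21_row (C : Matrix (Fin 3) (Fin 3) ℝ) (hC : inSO21 C) : C * Imat * Cᵀ = Imat := by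
  obtain ⟨h1, h2, _⟩ := hC
  have hinv : C * C⁻¹ = 1 := Matrix.mul_nonsing_inv C (by simp [h2])
  rw [h1] at hinv
  have h := congrArg (fun M => M * Imat) hinv
  simp only [mul_assoc, one_mul, Imat_mul_Imat, mul_one] at h ⊢
  exact h

lemma so21_col (C : Matrix (Fin 3) (Fin 3) ℝ) (hC : inSO21 C) : Cᵀ * Imat * C = Imat := by
  obtain ⟨h1, h2, _⟩ := hC
  have hinv : C⁻¹ * C = 1 := Matrix.nonsing_inv_mul C (by simp [h2])
  rw [h1] at hinv
  have h := congrArg (fun M => Imat * M) hinv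
  simp only [mul_assoc, mul_one] at h
  rw [← mul_assoc, Imat_mul_Imat, one_mul] at h
  simp only [mul_assoc]
  exact h

lemma so21_adj (C : Matrix (Fin 3) (Fin 3) ℝ) (hC : inSO21 C) :
    C.adjugate = Imat * Cᵀ * Imat := by
  obtain ⟨h1, h2, _⟩ := hC
  rw [← h1, Matrix.inv_def, h2]; simp

lemma assoc3 {A B D E : Matrix (Fin 3) (Fin 3) ℝ} (h : A * B * D = E)
    (X : Matrix (Fin 3) (Fin 3) ℝ) : A * (B * (D * X)) = E * X := by
  rw [← mul_assoc, ← mul_assoc, h]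

lemma assoc2 {A B E : Matrix (Fin 3) (Fin 3) ℝ} (h : A * B = E)
    (X : Matrix (Fin 3) (Fin 3) ℝ) : A * (B * X) = E * X := by
  rw [← mul_assoc, h]

lemma exists_cos_sin (x y : ℝ) (h : x ^ 2 + y ^ 2 = 1) :
    ∃ η : ℝ, Real.cos η = x ∧ Real.sin η = y := by
  have hx1 : -1 ≤ x := by nlinarith
  have hx2 : x ≤ 1 := by nlinarith
  by_cases hy : 0 ≤ y
  · refine ⟨Real.arccos x, Real.cos_arccos hx1 hx2, ?_⟩
    rw [Real.sin_arccos]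
    rw [show 1 - x ^ 2 = y ^ 2 by linarith]
    exact Real.sqrt_sq hy
  · refine ⟨-Real.arccos x, by rw [Real.cos_neg]; exact Real.cos_arccos hx1 hx2, ?_⟩
    rw [Real.sin_neg, Real.sin_arccos]
    rw [show 1 - x ^ 2 = y ^ 2 by linarith]
    rw [show y ^ 2 = (-y) ^ 2 by ring, Real.sqrt_sq (by linarith)]
    ring

/-- If `C = Kmat η * s` with `s` symmetric, then `cos η` and `sin η` are determined. -/
lemma angle_det (C : Matrix (Fin 3) (Fin 3) ℝ) (hC : inSO21 C) (h11 : 1 < C 0 0)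
    (η : ℝ) (s : Matrix (Fin 3) (Fin 3) ℝ) (hs : sᵀ = s) (hCs : C = Kmat η * s) :
    Real.cos η = (C 1 0 * C 0 1 + C 2 0 * C 0 2) / (C 0 0 ^ 2 - 1) ∧
    Real.sin η = (C 2 0 * C 0 1 - C 1 0 * C 0 2) / (C 0 0 ^ 2 - 1) := by
  have hseq : s = Kmat (-η) * C := by
    rw [hCs, ← mul_assoc, Kmat_mul_Kmat]
    simp [Kmat_zero]
  have hD : C 1 0 ^ 2 + C 2 0 ^ 2 = C 0 0 ^ 2 - 1 := by
    have h := congrFun (congrFun (so21_col C hC) 0) 0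
    simp [Matrix.mul_apply, Fin.sum_univ_three, Imat, diagonal, Matrix.vecHead,
      Matrix.vecTail] at h
    ring_nf
    ring_nf at h
    linarith
  have hDpos : (0:ℝ) < C 0 0 ^ 2 - 1 := by nlinarith
  have e1 : Real.cos η * C 1 0 + Real.sin η * C 2 0 = C 0 1 := by
    have h1 := congrFun (congrFun hs 0) 1
    rw [hseq] at h1
    simp only [Matrix.mul_apply, Fin.sum_univ_three, Matrix.transpose_apply] at h1
    simp [Kmat, Real.cos_neg, Real.sin_neg, Matrix.vecHead, Matrix.vecTail] at h1
    linarith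
  have e2 : -(Real.sin η) * C 1 0 + Real.cos η * C 2 0 = C 0 2 := by
    have h1 := congrFun (congrFun hs 0) 2
    rw [hseq] at h1
    simp only [Matrix.mul_apply, Fin.sum_univ_three, Matrix.transpose_apply] at h1
    simp [Kmat, Real.cos_neg, Real.sin_neg, Matrix.vecHead, Matrix.vecTail] at h1
    linarith
  constructor
  · field_simp
    linear_combination C 1 0 * e1 + C 2 0 * e2 - Real.cos η * hD
  · field_simp
    linear_combination C 2 0 * e1 - C 1 0 * e2 - Real.sin η * hD

lemma IK_swap (a : ℝ) (X : Matrix (Fin 3) (Fin 3) ℝ) :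
    Imat * (Kmat a * X) = Kmat a * (Imat * X) := by
  rw [← mul_assoc, Imat_Kmat_comm, mul_assoc]

lemma KKc (a : ℝ) (X : Matrix (Fin 3) (Fin 3) ℝ) : Kmat a * (Kmat (-a) * X) = X := by
  rw [← mul_assoc, Kmat_mul_Kmat]
  simp [Kmat_zero]

lemma KKc' (a : ℝ) (X : Matrix (Fin 3) (Fin 3) ℝ) : Kmat (-a) * (Kmat a * X) = X := by
  rw [← mul_assoc, Kmat_mul_Kmat]
  simp [Kmat_zero]

set_option maxHeartbeats 2000000 in
theorem stmt9 (C : Matrix (Fin 3) (Fin 3) ℝ) (hC : inSO21 C) (h11 : 1 < C 0 0) :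
    (∃! p : Matrix (Fin 3) (Fin 3) ℝ × Matrix (Fin 3) (Fin 3) ℝ,
      (∃ η : ℝ, p.1 = Kmat η) ∧ p.2ᵀ = p.2 ∧ inSO21 p.2 ∧ C = p.1 * p.2) ∧
    (∀ k s k' s' : Matrix (Fin 3) (Fin 3) ℝ,
      (∃ η : ℝ, k = Kmat η) → sᵀ = s → inSO21 s → C = k * s →
      (∃ η : ℝ, k' = Kmat η) → s'ᵀ = s' → inSO21 s' → C = s' * k' →
      k = k') := by
  -- scalar relations
  have hD : C 1 0 ^ 2 + C 2 0 ^ 2 = C 0 0 ^ 2 - 1 := by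
    have h := congrFun (congrFun (so21_col C hC) 0) 0
    simp [Matrix.mul_apply, Fin.sum_univ_three, Imat, diagonal, Matrix.vecHead,
      Matrix.vecTail] at h
    ring_nf; ring_nf at h; linarith
  have hD' : C 0 1 ^ 2 + C 0 2 ^ 2 = C 0 0 ^ 2 - 1 := by
    have h := congrFun (congrFun (so21_row C hC) 0) 0
    simp [Matrix.mul_apply, Fin.sum_univ_three, Imat, diagonal, Matrix.vecHead,
      Matrix.vecTail] at h
    ring_nf; ring_nf at h; linarith
  have hDpos : (0:ℝ) < C 0 0 ^ 2 - 1 := by nlinarith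
  have hD0 : C 0 0 ^ 2 - 1 ≠ 0 := ne_of_gt hDpos
  have ha : C 0 1 = C 1 0 * C 2 2 - C 1 2 * C 2 0 := by
    have h := congrFun (congrFun (so21_adj C hC) 1) 0
    simp [Matrix.adjugate_fin_three, Matrix.mul_apply, Fin.sum_univ_three, Imat, diagonal,
      Matrix.vecHead, Matrix.vecTail] at h
    linarith
  have hb : C 0 2 = C 1 1 * C 2 0 - C 1 0 * C 2 1 := by
    have h := congrFun (congrFun (so21_adj C hC) 2) 0
    simp [Matrix.adjugate_fin_three, Matrix.mul_apply, Fin.sum_univ_three, Imat, diagonal,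
      Matrix.vecHead, Matrix.vecTail] at h
    linarith
  have hc3 : C 1 0 * C 1 2 + C 2 0 * C 2 2 = C 0 0 * C 0 2 := by
    have h := congrFun (congrFun (so21_col C hC) 0) 2
    simp [Matrix.mul_apply, Fin.sum_univ_three, Imat, diagonal, Matrix.vecHead,
      Matrix.vecTail] at h
    linarith
  have hc4 : C 1 0 * C 1 1 + C 2 0 * C 2 1 = C 0 0 * C 0 1 := by
    have h := congrFun (congrFun (so21_col C hC) 0) 1
    simp [Matrix.mul_apply, Fin.sum_univ_three, Imat, diagonal, Matrix.vecHead,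
      Matrix.vecTail] at h
    linarith
  -- the angle
  have hcs : ((C 1 0 * C 0 1 + C 2 0 * C 0 2) / (C 0 0 ^ 2 - 1)) ^ 2 +
      ((C 2 0 * C 0 1 - C 1 0 * C 0 2) / (C 0 0 ^ 2 - 1)) ^ 2 = 1 := by
    field_simp
    linear_combination (C 0 1 ^ 2 + C 0 2 ^ 2) * hD + (C 0 0 ^ 2 - 1) * hD'
  obtain ⟨η, hcos, hsin⟩ := exists_cos_sin _ _ hcs
  -- the symmetric factor
  set s : Matrix (Fin 3) (Fin 3) ℝ := Kmat (-η) * C with hsdef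
  have e1 : Real.cos η * C 1 0 + Real.sin η * C 2 0 = C 0 1 := by
    rw [hcos, hsin]; field_simp; linear_combination C 0 1 * hD
  have e2 : -(Real.sin η) * C 1 0 + Real.cos η * C 2 0 = C 0 2 := by
    rw [hcos, hsin]; field_simp; linear_combination C 0 2 * hD
  have e3 : Real.cos η * C 1 2 + Real.sin η * C 2 2 =
      -(Real.sin η) * C 1 1 + Real.cos η * C 2 1 := by
    rw [hcos, hsin]; field_simp
    linear_combination (-(C 0 1)) * hb + C 0 1 * hc3 + C 0 2 * ha - C 0 2 * hc4
  have hsymm : sᵀ = s := by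
    ext i j
    fin_cases i <;> fin_cases j <;>
      simp only [hsdef, Matrix.transpose_apply, Matrix.mul_apply, Fin.sum_univ_three] <;>
      simp [Kmat, Real.cos_neg, Real.sin_neg, Matrix.vecHead, Matrix.vecTail] <;>
      linarith [e1, e2, e3]
  have hdecomp : C = Kmat η * s := by
    rw [hsdef, KKc]
  have hs00 : s 0 0 = C 0 0 := by
    rw [hsdef]
    simp [Matrix.mul_apply, Fin.sum_univ_three, Kmat, Matrix.vecHead, Matrix.vecTail]
  have hsSO : inSO21 s := by
    refine ⟨?_, ?_, ?_⟩
    · apply Matrix.inv_eq_right_inv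
      rw [hsdef, Matrix.transpose_mul, Kmat_transpose, neg_neg]
      simp only [mul_assoc]
      rw [assoc3 (so21_row C hC), IK_swap, Imat_mul_Imat, mul_one, Kmat_mul_Kmat]
      norm_num [Kmat_zero]
    · rw [hsdef, Matrix.det_mul, det_Kmat, hC.2.1, one_mul]
    · rw [hs00]; linarith
  -- the unique pair
  have HU : ∃! p : Matrix (Fin 3) (Fin 3) ℝ × Matrix (Fin 3) (Fin 3) ℝ,
      (∃ η : ℝ, p.1 = Kmat η) ∧ p.2ᵀ = p.2 ∧ inSO21 p.2 ∧ C = p.1 * p.2 := by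
    refine ⟨(Kmat η, s), ⟨⟨η, rfl⟩, hsymm, hsSO, hdecomp⟩, ?_⟩
    rintro ⟨q1, q2⟩ ⟨⟨η₂, hk₂⟩, hsym₂, hso₂, hdec₂⟩
    simp only at hk₂ hsym₂ hso₂ hdec₂ ⊢
    obtain ⟨hcos₂, hsin₂⟩ := angle_det C hC h11 η₂ q2 hsym₂ (by rw [hdec₂, hk₂])
    have hK2 : Kmat η₂ = Kmat η := by
      unfold Kmat
      rw [hcos, hsin, hcos₂, hsin₂]
    have hq2 : q2 = Kmat (-η₂) * C := by
      rw [hdec₂, hk₂, KKc']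
    have hK2' : Kmat (-η₂) = Kmat (-η) := by
      unfold Kmat
      rw [Real.cos_neg, Real.cos_neg, Real.sin_neg, Real.sin_neg, hcos, hsin, hcos₂, hsin₂]
    rw [Prod.mk.injEq]
    exact ⟨by rw [hk₂, hK2], by rw [hq2, hK2', hsdef]⟩
  refine ⟨HU, ?_⟩
  rintro k s1 k' s' ⟨η₁, hk⟩ hs1 hso1 hde1 ⟨η', hk'⟩ hs' hso' hde'
  -- conjugate s' to the right decomposition
  set t : Matrix (Fin 3) (Fin 3) ℝ := Kmat (-η') * s' * Kmat η' with htdef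
  have ht : tᵀ = t := by
    rw [htdef, Matrix.transpose_mul, Matrix.transpose_mul, Kmat_transpose, Kmat_transpose,
      neg_neg, hs', mul_assoc]
  have ht00 : t 0 0 = s' 0 0 := by
    rw [htdef]
    simp only [Matrix.mul_apply, Fin.sum_univ_three]
    simp [Kmat, Matrix.vecHead, Matrix.vecTail]
  have hs'row : s' * Imat * s' = Imat := by
    have := so21_row s' hso'
    rwa [hs'] at this
  have htSO : inSO21 t := by
    refine ⟨?_, ?_, ?_⟩
    · apply Matrix.inv_eq_right_inv
      rw [ht, htdef]
      simp only [mul_assoc]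
      rw [IK_swap, KKc, assoc3 hs'row, IK_swap, Imat_mul_Imat, mul_one, Kmat_mul_Kmat]
      norm_num [Kmat_zero]
    · rw [htdef, Matrix.det_mul, Matrix.det_mul, det_Kmat, det_Kmat, hso'.2.1]
      ring
    · rw [ht00]; exact hso'.2.2
  have hdect : C = Kmat η' * t := by
    rw [htdef, hde', hk']
    simp only [mul_assoc]
    rw [KKc]
  have hA : (∃ ηx : ℝ, ((k, s1) : Matrix (Fin 3) (Fin 3) ℝ × Matrix (Fin 3) (Fin 3) ℝ).1
      = Kmat ηx) ∧ (k, s1).2ᵀ = (k, s1).2 ∧ inSO21 (k, s1).2 ∧ C = (k, s1).1 * (k, s1).2 :=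
    ⟨⟨η₁, hk⟩, hs1, hso1, hde1⟩
  have hB : (∃ ηx : ℝ, ((Kmat η', t) : Matrix (Fin 3) (Fin 3) ℝ × Matrix (Fin 3) (Fin 3) ℝ).1
      = Kmat ηx) ∧ (Kmat η', t).2ᵀ = (Kmat η', t).2 ∧ inSO21 (Kmat η', t).2 ∧
      C = (Kmat η', t).1 * (Kmat η', t).2 :=
    ⟨⟨η', rfl⟩, ht, htSO, hdect⟩
  have h12 : (k, s1) = (Kmat η', t) := HU.unique hA hB
  rw [hk']
  exact congrArg Prod.fst h12
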